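/- Let V be a nontrivial finite-dimensional normed vector space over ℂ, T : V →ₗ[ℂ] V a linear endomorphism, and v ∈ V. If T^n v → 0 as n → ∞, then the decay is in fact exponential: there exist constants C > 0 and ρ ∈ (0,1) such that ‖T^n v‖ ≤ C · ρ^n for all n ∈ ℕ. -/

import Mathlib

open Filter

set_option maxHeartbeats 1600000 in
/-- If `T` is a linear endomorphism of a nontrivial finite-dimensional normed complex
vector space and `T^n v → 0`, then `‖T^n v‖` decays exponentially. -/
theorem power_orbit_tendsto_zero_exponential_decay
    {V : Type*} [NormedAddCommGroup V] [NormedSpace ℂ V]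
    [FiniteDimensional ℂ V] [Nontrivial V]
    (T : V →ₗ[ℂ] V) (v : V)
    (h : Filter.Tendsto (fun n : ℕ => (T ^ n) v) Filter.atTop (nhds 0)) :
    ∃ C : ℝ, 0 < C ∧ ∃ ρ : ℝ, ρ ∈ Set.Ioo (0 : ℝ) 1 ∧
      ∀ n : ℕ, ‖(T ^ n) v‖ ≤ C * ρ ^ n := by
  classical
  -- the invariant subspace spanned by the orbit
  set W : Submodule ℂ V := Submodule.span ℂ (Set.range fun n : ℕ => (T ^ n) v) with hWdef
  have hmemW : ∀ n : ℕ, (T ^ n) v ∈ W := fun n =>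
    Submodule.subset_span ⟨n, rfl⟩
  have hW : ∀ x ∈ W, T x ∈ W := by
    intro x hx
    induction hx using Submodule.span_induction with
    | mem x hx =>
      obtain ⟨n, rfl⟩ := hx
      have : T ((T ^ n) v) = (T ^ (n + 1)) v := by
        rw [pow_succ']; rfl
      rw [this]; exact hmemW _
    | zero => simpa using (Submodule.zero_mem W)
    | add x y _ _ hx hy => simpa using W.add_mem hx hy
    | smul c x _ hx => simpa using W.smul_mem c hx
  -- pointwise convergence on all of W
  have hten : ∀ x ∈ W, Tendsto (fun n : ℕ => (T ^ n) x) atTop (nhds 0) := by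
    intro x hx
    induction hx using Submodule.span_induction with
    | mem x hx =>
      obtain ⟨k, rfl⟩ := hx
      have h' : Tendsto (fun n : ℕ => (T ^ (n + k)) v) atTop (nhds 0) :=
        h.comp (tendsto_add_atTop_nat k)
      have : (fun n : ℕ => (T ^ n) ((T ^ k) v)) = fun n : ℕ => (T ^ (n + k)) v := by
        funext n; rw [pow_add]; rfl
      rw [this]; exact h'
    | zero => simpa using (tendsto_const_nhds : Tendsto (fun _ : ℕ => (0 : V)) atTop (nhds 0))
    | add x y _ _ hx hy =>
      have := hx.add hy
      simpa using this
    | smul c x _ hx =>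
      have := hx.const_smul c
      simpa using this
  -- restrict T to W as a continuous linear map
  let S : W →L[ℂ] W := LinearMap.toContinuousLinearMap (T.restrict hW)
  have hcoe : ∀ (n : ℕ) (x : W), (((S ^ n) x : W) : V) = (T ^ n) (x : V) := by
    intro n
    induction n with
    | zero => intro x; simp
    | succ n ih =>
      intro x
      have h1 : (S ^ (n + 1)) x = (S ^ n) (S x) := by
        rw [pow_succ]; rfl
      have h2 : ((S x : W) : V) = T (x : V) := rfl
      rw [h1, ih, h2, pow_succ, Module.End.mul_apply]
  -- powers of S tend to 0 in operator norm
  have htenW : ∀ x : W, Tendsto (fun n : ℕ => (S ^ n) x) atTop (nhds 0) := by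
    intro x
    rw [Topology.IsEmbedding.subtypeVal.tendsto_nhds_iff]
    have : (Subtype.val ∘ fun n : ℕ => (S ^ n) x) = fun n : ℕ => (T ^ n) (x : V) := by
      funext n; exact hcoe n x
    rw [this]
    simpa using hten (x : V) x.2
  have : FiniteDimensional ℂ W := inferInstance
  let d := Module.finrank ℂ W
  let b : Module.Basis (Fin d) ℂ W := Module.finBasis ℂ W
  let φ : (W →L[ℂ] W) →ₗ[ℂ] (Fin d → W) :=
    { toFun := fun L i => L (b i)
      map_add' := fun L M => by funext i; simp
      map_smul' := fun c L => by funext i; simp }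
  have hφinj : LinearMap.ker φ = ⊥ := by
    rw [LinearMap.ker_eq_bot']
    intro L hL
    ext x
    have hb : ∀ i, L (b i) = 0 := fun i => congrFun hL i
    have : (L : W →ₗ[ℂ] W) = 0 := Module.Basis.ext b (by simpa using hb)
    simpa using congrFun (congrArg (fun f : W →ₗ[ℂ] W => (f : W → W)) this) x
  have hφemb : Topology.IsClosedEmbedding φ := LinearMap.isClosedEmbedding_of_injective hφinj
  have htendS : Tendsto (fun n : ℕ => (S ^ n : W →L[ℂ] W)) atTop (nhds 0) := by
    rw [hφemb.isEmbedding.tendsto_nhds_iff]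
    have hφ0 : φ 0 = 0 := map_zero φ
    rw [Function.comp_def]
    rw [show φ (0 : W →L[ℂ] W) = 0 from hφ0] at *
    rw [tendsto_pi_nhds]
    intro i
    exact htenW (b i)
  have hnorm : Tendsto (fun n : ℕ => ‖(S ^ n : W →L[ℂ] W)‖) atTop (nhds 0) :=
    (tendsto_zero_iff_norm_tendsto_zero (f := fun n : ℕ => (S ^ n : W →L[ℂ] W))).mp htendS
  -- pick N with ‖S^N‖ < 1/2
  obtain ⟨N, hN2, hN1⟩ :=
    ((hnorm.eventually_lt_const (by norm_num : (0:ℝ) < 1/2)).and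
      (eventually_ge_atTop 1)).exists
  have hNpos : 0 < N := hN1
  -- geometric bound on ‖(S^N)^q‖
  have hq : ∀ q : ℕ, ‖((S ^ N) ^ q : W →L[ℂ] W)‖ ≤ (1/2 : ℝ) ^ q := by
    intro q
    induction q with
    | zero => rw [pow_zero]; exact ContinuousLinearMap.norm_id_le
    | succ q ih =>
      calc ‖((S ^ N) ^ (q + 1) : W →L[ℂ] W)‖
            = ‖(((S ^ N) ^ q).comp (S ^ N) : W →L[ℂ] W)‖ := by
            rw [pow_succ, ContinuousLinearMap.mul_def]
        _ ≤ ‖((S ^ N) ^ q : W →L[ℂ] W)‖ * ‖(S ^ N : W →L[ℂ] W)‖ :=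
            ContinuousLinearMap.opNorm_comp_le _ _
        _ ≤ (1/2 : ℝ) ^ q * (1/2 : ℝ) :=
            mul_le_mul ih hN2.le (ContinuousLinearMap.opNorm_nonneg _) (by positivity)
        _ = (1/2 : ℝ) ^ (q + 1) := by ring
  set B : ℝ := (∑ r ∈ Finset.range N, ‖(S ^ r : W →L[ℂ] W)‖) + 1 with hBdef
  have hBpos : 0 < B := by
    have : (0:ℝ) ≤ ∑ r ∈ Finset.range N, ‖(S ^ r : W →L[ℂ] W)‖ :=
      Finset.sum_nonneg fun _ _ => ContinuousLinearMap.opNorm_nonneg _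
    linarith
  have hBr : ∀ r < N, ‖(S ^ r : W →L[ℂ] W)‖ ≤ B := by
    intro r hr
    have := Finset.single_le_sum (f := fun r => ‖(S ^ r : W →L[ℂ] W)‖)
      (fun _ _ => ContinuousLinearMap.opNorm_nonneg _) (Finset.mem_range.mpr hr)
    linarith
  -- the decay rate
  set ρ : ℝ := (1/2 : ℝ) ^ ((N : ℝ)⁻¹) with hρdef
  have hNR : (0:ℝ) < (N:ℝ) := by exact_mod_cast hNpos
  have hρ0 : 0 < ρ := Real.rpow_pos_of_pos (by norm_num) _
  have hρ1 : ρ < 1 := Real.rpow_lt_one (by norm_num) (by norm_num) (by positivity)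
  refine ⟨2 * B * (‖v‖ + 1), by positivity, ρ, ⟨hρ0, hρ1⟩, ?_⟩
  intro n
  have hvW : v ∈ W := by simpa using hmemW 0
  set x : W := ⟨v, hvW⟩ with hxdef
  -- rewrite the orbit norm via S
  have hx : ‖(T ^ n) v‖ = ‖(S ^ n) x‖ := by
    rw [show ‖(S ^ n) x‖ = ‖(((S ^ n) x : W) : V)‖ from rfl, hcoe]
  rw [hx]
  set q : ℕ := n / N with hqdef
  set r : ℕ := n % N with hrdef
  have hnqr : N * q + r = n := Nat.div_add_mod n N
  have hrN : r < N := Nat.mod_lt _ hNpos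
  have hSn : ‖(S ^ n : W →L[ℂ] W)‖ ≤ (1/2 : ℝ) ^ q * B := by
    have hsplit : (S ^ n : W →L[ℂ] W) = (S ^ N) ^ q * S ^ r := by
      rw [← pow_mul, ← pow_add, hnqr]
    calc ‖(S ^ n : W →L[ℂ] W)‖ ≤ ‖((S ^ N) ^ q : W →L[ℂ] W)‖ * ‖(S ^ r : W →L[ℂ] W)‖ := by
          rw [hsplit, ContinuousLinearMap.mul_def]
          exact ContinuousLinearMap.opNorm_comp_le _ _
      _ ≤ (1/2 : ℝ) ^ q * B :=
          mul_le_mul (hq q) (hBr r hrN) (ContinuousLinearMap.opNorm_nonneg _) (by positivity)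
  -- ρ^n ≥ (1/2)^(q+1)
  have hρn : (1/2 : ℝ) ^ q * (1/2 : ℝ) ≤ ρ ^ n := by
    have h1 : (ρ : ℝ) ^ n = (1/2 : ℝ) ^ ((N:ℝ)⁻¹ * n) := by
      rw [hρdef, ← Real.rpow_natCast ((1/2:ℝ) ^ ((N:ℝ)⁻¹)) n, ← Real.rpow_mul (by norm_num)]
    have h2 : (N:ℝ)⁻¹ * n ≤ (q : ℝ) + 1 := by
      rw [inv_mul_le_iff₀ hNR]
      have : (n : ℝ) = N * q + r := by exact_mod_cast hnqr.symm
      rw [this]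
      have : (r : ℝ) < N := by exact_mod_cast hrN
      nlinarith [hNR]
    have h3 : (1/2 : ℝ) ^ (((q:ℝ)) + 1) ≤ (1/2 : ℝ) ^ ((N:ℝ)⁻¹ * n) :=
      Real.rpow_le_rpow_of_exponent_ge (by norm_num) (by norm_num) h2
    have h4 : (1/2 : ℝ) ^ (((q:ℝ)) + 1) = (1/2 : ℝ) ^ q * (1/2 : ℝ) := by
      rw [show ((q:ℝ) + 1) = ((q + 1 : ℕ) : ℝ) by push_cast; ring,
        Real.rpow_natCast]
      ring
    rw [h1, ← h4]; exact h3
  have hle : ‖(S ^ n) x‖ ≤ ‖(S ^ n : W →L[ℂ] W)‖ * ‖x‖ := (S ^ n).le_opNorm x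
  have hxv : ‖x‖ = ‖v‖ := rfl
  have hq0 : (0:ℝ) < (1/2:ℝ) ^ q := by positivity
  have hvnn : (0:ℝ) ≤ ‖v‖ := norm_nonneg _
  calc ‖(S ^ n) x‖ ≤ ‖(S ^ n : W →L[ℂ] W)‖ * ‖v‖ := by rw [← hxv]; exact hle
    _ ≤ ((1/2 : ℝ) ^ q * B) * ‖v‖ := by
        apply mul_le_mul_of_nonneg_right hSn hvnn
    _ ≤ 2 * B * (‖v‖ + 1) * ((1/2 : ℝ) ^ q * (1/2 : ℝ)) := by nlinarith
    _ ≤ 2 * B * (‖v‖ + 1) * ρ ^ n := by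
        apply mul_le_mul_of_nonneg_left hρn (by positivity)
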